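/- MCAR validity of test-wise deletion: Let X, Y, Z be random variables and R a binary indicator with (X, Y, Z) ⫫ R. Then X ⫫ Y | Z if and only if X ⫫ Y | (Z, R); in particular, X ⫫ Y | Z holds iff X ⫫ Y | Z under the conditional measure P(· | R = 0), assuming P(R = 0) > 0. -/

import Mathlib

open MeasureTheory ProbabilityTheory


lemma aux_setIntegral_inter {Ω : Type*} {mT mR' : MeasurableSpace Ω}
    [mΩ : MeasurableSpace Ω] {μ : Measure Ω} [IsProbabilityMeasure μ]
    (hTle : mT ≤ mΩ) (hRle : mR' ≤ mΩ)
    (hInd : Indep mT mR' μ)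
    {g : Ω → ℝ} (hg : StronglyMeasurable[mT] g) (hgi : Integrable g μ)
    {B C : Set Ω} (hB : MeasurableSet[mT] B) (hC : MeasurableSet[mR'] C) :
    ∫ x in B ∩ C, g x ∂μ = (μ C).toReal * ∫ x in B, g x ∂μ := by
  have hBm : MeasurableSet[mΩ] B := hTle _ hB
  have hCm : MeasurableSet[mΩ] C := hRle _ hC
  have hhm : Measurable[mT] (B.indicator g) := hg.measurable.indicator hB
  have hkm : Measurable[mR'] (C.indicator (fun _ => (1:ℝ))) :=
    Measurable.indicator (m := mR') measurable_const hC
  have hIndF : IndepFun (B.indicator g) (C.indicator (fun _ => (1:ℝ))) μ :=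
    indep_of_indep_of_le_left (indep_of_indep_of_le_right hInd hkm.comap_le) hhm.comap_le
  have hhi : Integrable (B.indicator g) μ := hgi.indicator hBm
  have hki : Integrable (C.indicator (fun _ => (1:ℝ))) μ :=
    (integrable_const (1:ℝ)).indicator hCm
  have hmul := hIndF.integral_mul_eq_mul_integral hhi.aestronglyMeasurable hki.aestronglyMeasurable
  have hintk : ∫ x, C.indicator (fun _ => (1:ℝ)) x ∂μ = (μ C).toReal := by
    rw [integral_indicator_const (1:ℝ) hCm]; simp [measureReal_def]
  have heq : (B ∩ C).indicator g = B.indicator g * C.indicator (fun _ => (1:ℝ)) := by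
    funext x
    have := Set.inter_indicator_mul (f := g) (g := fun _ => (1:ℝ)) (s := B) (t := C) x
    simpa using this
  calc ∫ x in B ∩ C, g x ∂μ
      = ∫ x, (B ∩ C).indicator g x ∂μ := (integral_indicator (hBm.inter hCm)).symm
    _ = ∫ x, (B.indicator g * C.indicator (fun _ => (1:ℝ))) x ∂μ := by rw [heq]
    _ = (∫ x, B.indicator g x ∂μ) * ∫ x, C.indicator (fun _ => (1:ℝ)) x ∂μ := hmul
    _ = (μ C).toReal * ∫ x in B, g x ∂μ := by
        rw [hintk, integral_indicator hBm, mul_comm]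

lemma aux_condexp_pair_eq {Ω βZ : Type*} {mT : MeasurableSpace Ω}
    [mΩ : MeasurableSpace Ω] [mβZ : MeasurableSpace βZ]
    {μ : Measure Ω} [IsProbabilityMeasure μ]
    (hTle : mT ≤ mΩ)
    {Z : Ω → βZ} {R : Ω → Bool} (hZ : Measurable Z) (hR : Measurable R)
    (hZT : MeasurableSpace.comap Z mβZ ≤ mT)
    (hInd : Indep mT (MeasurableSpace.comap R inferInstance) μ)
    {f : Ω → ℝ} (hfm : StronglyMeasurable[mT] f) (hfi : Integrable f μ) :
    μ[f | MeasurableSpace.comap (fun ω => (Z ω, R ω)) inferInstance]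
      =ᵐ[μ] μ[f | MeasurableSpace.comap Z mβZ] := by
  have hZRle : MeasurableSpace.comap (fun ω => (Z ω, R ω)) inferInstance ≤ mΩ :=
    (hZ.prodMk hR).comap_le
  have hZle : MeasurableSpace.comap Z mβZ ≤ mΩ := hZT.trans hTle
  have hZZR : MeasurableSpace.comap Z mβZ ≤
      MeasurableSpace.comap (fun ω => (Z ω, R ω)) inferInstance := by
    calc MeasurableSpace.comap Z mβZ
        = MeasurableSpace.comap (fun ω => (Z ω, R ω)) (MeasurableSpace.comap Prod.fst mβZ) :=
          (MeasurableSpace.comap_comp (f := Prod.fst) (g := fun ω => (Z ω, R ω))).symm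
      _ ≤ MeasurableSpace.comap (fun ω => (Z ω, R ω)) inferInstance :=
          MeasurableSpace.comap_mono measurable_fst.comap_le
  have hgm : StronglyMeasurable[mT] (μ[f | MeasurableSpace.comap Z mβZ]) :=
    stronglyMeasurable_condExp.mono hZT
  -- set-integral equality on all sets of the pair σ-algebra
  have hset : ∀ s, MeasurableSet[MeasurableSpace.comap (fun ω => (Z ω, R ω)) inferInstance] s →
      ∫ x in s, (μ[f | MeasurableSpace.comap Z mβZ]) x ∂μ = ∫ x in s, f x ∂μ := by
    have h_eq : MeasurableSpace.comap (fun ω => (Z ω, R ω)) inferInstance =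
        MeasurableSpace.generateFrom
          (Set.preimage (fun ω => (Z ω, R ω)) ''
            Set.image2 (· ×ˢ ·) { s : Set βZ | MeasurableSet s } { t : Set Bool | MeasurableSet t }) := by
      conv_lhs => rw [← generateFrom_prod]
      exact MeasurableSpace.comap_generateFrom
    have h_pi : IsPiSystem
        (Set.preimage (fun ω => (Z ω, R ω)) ''
          Set.image2 (· ×ˢ ·) { s : Set βZ | MeasurableSet s } { t : Set Bool | MeasurableSet t }) := by
      exact (isPiSystem_prod (α := βZ) (β := Bool)).comap (fun ω => (Z ω, R ω))
    refine fun s hs => MeasurableSpace.induction_on_inter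
      (C := fun s _ => ∫ x in s, (μ[f | MeasurableSpace.comap Z mβZ]) x ∂μ = ∫ x in s, f x ∂μ)
      h_eq h_pi ?_ ?_ ?_ ?_ s hs
    · simp
    · rintro t ⟨r, hr, rfl⟩
      obtain ⟨B, hB, C, hC, rfl⟩ := hr
      have hpre : (fun ω => (Z ω, R ω)) ⁻¹' (B ×ˢ C) = Z ⁻¹' B ∩ R ⁻¹' C :=
        Set.mk_preimage_prod Z R
      rw [hpre]
      have hBmT : MeasurableSet[mT] (Z ⁻¹' B) := hZT _ ⟨B, hB, rfl⟩
      have hCmR : MeasurableSet[MeasurableSpace.comap R inferInstance] (R ⁻¹' C) := ⟨C, hC, rfl⟩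
      rw [aux_setIntegral_inter hTle hR.comap_le hInd hgm integrable_condExp hBmT hCmR,
        aux_setIntegral_inter hTle hR.comap_le hInd hfm hfi hBmT hCmR,
        setIntegral_condExp hZle hfi ⟨B, hB, rfl⟩]
    · intro t htm iht
      have h1 := integral_add_compl (hZRle _ htm) (integrable_condExp :
        Integrable (μ[f | MeasurableSpace.comap Z mβZ]) μ)
      have h2 := integral_add_compl (hZRle _ htm) hfi
      have h3 : ∫ x, (μ[f | MeasurableSpace.comap Z mβZ]) x ∂μ = ∫ x, f x ∂μ :=
        integral_condExp hZle (f := f) (μ := μ)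
      linarith
    · intro g hdisj hgm' ihg
      rw [integral_iUnion (fun i => hZRle _ (hgm' i)) hdisj integrable_condExp.integrableOn,
        integral_iUnion (fun i => hZRle _ (hgm' i)) hdisj hfi.integrableOn]
      exact tsum_congr ihg
  exact (ae_eq_condExp_of_forall_setIntegral_eq hZRle hfi
    (fun s _ _ => integrable_condExp.integrableOn)
    (fun s hs _ => hset s hs)
    ((stronglyMeasurable_condExp.mono hZZR).aestronglyMeasurable)).symm

lemma aux_setIntegral_cond {Ω : Type*} {mT mR' : MeasurableSpace Ω}
    [mΩ : MeasurableSpace Ω] {μ : Measure Ω} [IsProbabilityMeasure μ]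
    (hTle : mT ≤ mΩ) (hRle : mR' ≤ mΩ) (hInd : Indep mT mR' μ)
    {E : Set Ω} (hE : MeasurableSet[mR'] E) (hEpos : μ E ≠ 0)
    {g : Ω → ℝ} (hg : StronglyMeasurable[mT] g) (hgi : Integrable g μ)
    {s : Set Ω} (hs : MeasurableSet[mT] s) :
    ∫ x in s, g x ∂(μ[|E]) = ∫ x in s, g x ∂μ := by
  have hEm : MeasurableSet[mΩ] E := hRle _ hE
  have hsm : MeasurableSet[mΩ] s := hTle _ hs
  have h1 : (μ[|E]).restrict s = (μ E)⁻¹ • μ.restrict (s ∩ E) := by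
    rw [ProbabilityTheory.cond, Measure.restrict_smul, Measure.restrict_restrict hsm]
  rw [show ∫ x in s, g x ∂(μ[|E]) = ∫ x, g x ∂((μ[|E]).restrict s) from rfl, h1,
    integral_smul_measure,
    show ∫ x, g x ∂(μ.restrict (s ∩ E)) = ∫ x in s ∩ E, g x ∂μ from rfl,
    aux_setIntegral_inter hTle hRle hInd hg hgi hs hE, smul_eq_mul, ← mul_assoc,
    ENNReal.toReal_inv, inv_mul_cancel₀, one_mul]
  exact ENNReal.toReal_ne_zero.2 ⟨hEpos, measure_ne_top μ E⟩

lemma aux_integrable_cond {Ω : Type*} [mΩ : MeasurableSpace Ω] {μ : Measure Ω}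
    {E : Set Ω} {g : Ω → ℝ} (hgi : Integrable g μ) :
    Integrable g (μ[|E]) := by
  by_cases h : μ E = 0
  · have hz : μ[|E] = 0 := by
      simp [ProbabilityTheory.cond, Measure.restrict_eq_zero.2 h]
    rw [hz]
    exact integrable_zero_measure
  · exact (hgi.integrableOn).smul_measure (ENNReal.inv_ne_top.2 h)

lemma aux_condexp_cond_eq {Ω βZ : Type*} {mT mR' : MeasurableSpace Ω}
    [mΩ : MeasurableSpace Ω] [mβZ : MeasurableSpace βZ]
    {μ : Measure Ω} [IsProbabilityMeasure μ]
    (hTle : mT ≤ mΩ) (hRle : mR' ≤ mΩ) (hInd : Indep mT mR' μ)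
    {Z : Ω → βZ} (hZT : MeasurableSpace.comap Z mβZ ≤ mT)
    {E : Set Ω} (hE : MeasurableSet[mR'] E) (hEpos : μ E ≠ 0)
    {f : Ω → ℝ} (hfm : StronglyMeasurable[mT] f) (hfi : Integrable f μ) :
    μ[f | MeasurableSpace.comap Z mβZ] =ᵐ[μ[|E]] (μ[|E])[f | MeasurableSpace.comap Z mβZ] := by
  haveI : IsProbabilityMeasure (μ[|E]) := cond_isProbabilityMeasure hEpos
  have hZle : MeasurableSpace.comap Z mβZ ≤ mΩ := hZT.trans hTle
  have hgm : StronglyMeasurable[mT] (μ[f | MeasurableSpace.comap Z mβZ]) :=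
    stronglyMeasurable_condExp.mono hZT
  refine ae_eq_condExp_of_forall_setIntegral_eq hZle (aux_integrable_cond hfi)
    (fun s _ _ => (aux_integrable_cond integrable_condExp).integrableOn)
    (fun s hs _ => ?_) stronglyMeasurable_condExp.aestronglyMeasurable
  rw [aux_setIntegral_cond hTle hRle hInd hE hEpos hgm integrable_condExp (hZT _ hs),
    aux_setIntegral_cond hTle hRle hInd hE hEpos hfm hfi (hZT _ hs),
    setIntegral_condExp hZle hfi hs]

lemma aux_null_of_cond_null {Ω : Type*} {mT mR' : MeasurableSpace Ω}
    [mΩ : MeasurableSpace Ω] {μ : Measure Ω} [IsProbabilityMeasure μ]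
    (hRle : mR' ≤ mΩ) (hInd : Indep mT mR' μ)
    {E : Set Ω} (hE : MeasurableSet[mR'] E) (hEpos : μ E ≠ 0)
    {N : Set Ω} (hN : MeasurableSet[mT] N) (h : μ[|E] N = 0) : μ N = 0 := by
  have hEm : MeasurableSet[mΩ] E := hRle _ hE
  rw [cond_apply hEm] at h
  have hENzero : μ (E ∩ N) = 0 := by
    rcases mul_eq_zero.1 h with h' | h'
    · exact absurd (ENNReal.inv_eq_zero.1 h') (measure_ne_top μ E)
    · exact h'
  have := (Indep_iff mT mR' μ).1 hInd N E hN hE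
  rw [Set.inter_comm] at hENzero
  rw [hENzero] at this
  rcases mul_eq_zero.1 this.symm with h' | h'
  · exact h'
  · exact absurd h' hEpos

/-- MCAR validity of test-wise deletion: if the binary indicator `R`
is independent of `(X, Y, Z)` and `P(R = 0) > 0`, then `X ⫫ Y | Z` iff
`X ⫫ Y | (Z, R)`, and moreover `X ⫫ Y | Z` under `P` iff `X ⫫ Y | Z` under the
conditional measure `P(· | R = 0)` (test-wise deletion). -/
theorem mcar_testwise_deletion_valid
    {Ω : Type*} [MeasurableSpace Ω] [StandardBorelSpace Ω] [Nonempty Ω]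
    (μ : Measure Ω) [IsProbabilityMeasure μ]
    {βX βY βZ : Type*} [MeasurableSpace βX] [MeasurableSpace βY] [MeasurableSpace βZ]
    (X : Ω → βX) (Y : Ω → βY) (Z : Ω → βZ) (R : Ω → Bool)
    (hX : Measurable X) (hY : Measurable Y) (hZ : Measurable Z) (hR : Measurable R)
    (hMCAR : IndepFun (fun ω => (X ω, Y ω, Z ω)) R μ)
    (hpos : 0 < μ (R ⁻¹' {false})) :
    (CondIndepFun (MeasurableSpace.comap Z inferInstance) hZ.comap_le X Y μ ↔
      CondIndepFun (MeasurableSpace.comap (fun ω => (Z ω, R ω)) inferInstance)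
        ((hZ.prodMk hR).comap_le) X Y μ) ∧
    (CondIndepFun (MeasurableSpace.comap Z inferInstance) hZ.comap_le X Y μ ↔
      CondIndepFun (MeasurableSpace.comap Z inferInstance) hZ.comap_le X Y
        (μ[|R ⁻¹' {false}])) := by
    -- notation
  set T : Ω → βX × βY × βZ := fun ω => (X ω, Y ω, Z ω) with hTdef
  have hT : Measurable T := hX.prodMk (hY.prodMk hZ)
  have hTle : MeasurableSpace.comap T inferInstance ≤ ‹MeasurableSpace Ω› := hT.comap_le
  have hInd : Indep (MeasurableSpace.comap T inferInstance)
      (MeasurableSpace.comap R inferInstance) μ := hMCAR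
  have hZT : MeasurableSpace.comap Z inferInstance ≤ MeasurableSpace.comap T inferInstance := by
    calc MeasurableSpace.comap Z inferInstance
        = MeasurableSpace.comap T
            (MeasurableSpace.comap (fun p : βX × βY × βZ => p.2.2) inferInstance) :=
          (MeasurableSpace.comap_comp (g := T) (f := fun p : βX × βY × βZ => p.2.2)).symm
      _ ≤ MeasurableSpace.comap T inferInstance :=
          MeasurableSpace.comap_mono (measurable_snd.comp measurable_snd).comap_le
  have hXT : MeasurableSpace.comap X inferInstance ≤ MeasurableSpace.comap T inferInstance := by
    calc MeasurableSpace.comap X inferInstance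
        = MeasurableSpace.comap T
            (MeasurableSpace.comap (fun p : βX × βY × βZ => p.1) inferInstance) :=
          (MeasurableSpace.comap_comp (g := T) (f := fun p : βX × βY × βZ => p.1)).symm
      _ ≤ MeasurableSpace.comap T inferInstance :=
          MeasurableSpace.comap_mono measurable_fst.comap_le
  have hYT : MeasurableSpace.comap Y inferInstance ≤ MeasurableSpace.comap T inferInstance := by
    calc MeasurableSpace.comap Y inferInstance
        = MeasurableSpace.comap T
            (MeasurableSpace.comap (fun p : βX × βY × βZ => p.2.1) inferInstance) :=
          (MeasurableSpace.comap_comp (g := T) (f := fun p : βX × βY × βZ => p.2.1)).symm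
      _ ≤ MeasurableSpace.comap T inferInstance :=
          MeasurableSpace.comap_mono (measurable_fst.comp measurable_snd).comap_le
  have hEmR : MeasurableSet[MeasurableSpace.comap R inferInstance] (R ⁻¹' {false}) :=
    ⟨{false}, measurableSet_singleton false, rfl⟩
  have hEpos : μ (R ⁻¹' {false}) ≠ 0 := hpos.ne'
  haveI hPcond : IsProbabilityMeasure (μ[|R ⁻¹' {false}]) := cond_isProbabilityMeasure hEpos
  -- measurability of the relevant sets in mT
  have hsetX : ∀ {s : Set βX}, MeasurableSet s →
      MeasurableSet[MeasurableSpace.comap T inferInstance] (X ⁻¹' s) :=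
    fun hs => hXT _ ⟨_, hs, rfl⟩
  have hsetY : ∀ {t : Set βY}, MeasurableSet t →
      MeasurableSet[MeasurableSpace.comap T inferInstance] (Y ⁻¹' t) :=
    fun ht => hYT _ ⟨_, ht, rfl⟩
  -- indicator facts
  have hfm : ∀ {A : Set Ω}, MeasurableSet[MeasurableSpace.comap T inferInstance] A →
      StronglyMeasurable[MeasurableSpace.comap T inferInstance]
        (A.indicator (fun _ => (1:ℝ))) :=
    fun hA => stronglyMeasurable_const.indicator hA
  have hfi : ∀ {A : Set Ω}, MeasurableSet[MeasurableSpace.comap T inferInstance] A →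
      Integrable (A.indicator (fun _ => (1:ℝ))) μ :=
    fun hA => (integrable_const (1:ℝ)).indicator (hTle _ hA)
  -- key equalities
  have K1 : ∀ {A : Set Ω}, MeasurableSet[MeasurableSpace.comap T inferInstance] A →
      (μ⟦A | MeasurableSpace.comap (fun ω => (Z ω, R ω)) inferInstance⟧)
        =ᵐ[μ] μ⟦A | MeasurableSpace.comap Z inferInstance⟧ :=
    fun hA => aux_condexp_pair_eq hTle hZ hR hZT hInd (hfm hA) (hfi hA)
  have K2 : ∀ {A : Set Ω}, MeasurableSet[MeasurableSpace.comap T inferInstance] A →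
      (μ⟦A | MeasurableSpace.comap Z inferInstance⟧)
        =ᵐ[μ[|R ⁻¹' {false}]] (μ[|R ⁻¹' {false}])⟦A | MeasurableSpace.comap Z inferInstance⟧ :=
    fun hA => aux_condexp_cond_eq hTle hR.comap_le hInd hZT hEmR hEpos (hfm hA) (hfi hA)
  constructor
  · rw [condIndepFun_iff_condExp_inter_preimage_eq_mul hX hY,
      condIndepFun_iff_condExp_inter_preimage_eq_mul hX hY]
    constructor
    · intro h s t hs ht
      filter_upwards [K1 ((hsetX hs).inter (hsetY ht)), K1 (hsetX hs), K1 (hsetY ht),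
        h s t hs ht] with ω e12 e1 e2 hp
      rw [e12, hp, ← e1, ← e2]
    · intro h s t hs ht
      filter_upwards [K1 ((hsetX hs).inter (hsetY ht)), K1 (hsetX hs), K1 (hsetY ht),
        h s t hs ht] with ω e12 e1 e2 hp
      rw [← e12, hp, e1, e2]
  · rw [condIndepFun_iff_condExp_inter_preimage_eq_mul hX hY,
      condIndepFun_iff_condExp_inter_preimage_eq_mul hX hY]
    constructor
    · intro h s t hs ht
      have hp' := (h s t hs ht).filter_mono
        (cond_absolutelyContinuous (s := R ⁻¹' {false}) (μ := μ)).ae_le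
      filter_upwards [K2 ((hsetX hs).inter (hsetY ht)), K2 (hsetX hs), K2 (hsetY ht),
        hp'] with ω e12 e1 e2 hp
      rw [← e12, hp, e1, e2]
    · intro h s t hs ht
      -- strongly measurable versions w.r.t. comap Z
      have H : (μ⟦X ⁻¹' s ∩ Y ⁻¹' t | MeasurableSpace.comap Z inferInstance⟧)
          =ᵐ[μ[|R ⁻¹' {false}]] fun ω =>
            (μ⟦X ⁻¹' s | MeasurableSpace.comap Z inferInstance⟧) ω *
            (μ⟦Y ⁻¹' t | MeasurableSpace.comap Z inferInstance⟧) ω := by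
        filter_upwards [K2 ((hsetX hs).inter (hsetY ht)), K2 (hsetX hs), K2 (hsetY ht),
          h s t hs ht] with ω e12 e1 e2 hp
        rw [e12, hp, ← e1, ← e2]
      -- upgrade from a.e. μ[|E] to a.e. μ
      have hu : Measurable[MeasurableSpace.comap Z inferInstance]
          (μ⟦X ⁻¹' s ∩ Y ⁻¹' t | MeasurableSpace.comap Z inferInstance⟧) :=
        stronglyMeasurable_condExp.measurable
      have hv : Measurable[MeasurableSpace.comap Z inferInstance]
          (fun ω => (μ⟦X ⁻¹' s | MeasurableSpace.comap Z inferInstance⟧) ω *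
            (μ⟦Y ⁻¹' t | MeasurableSpace.comap Z inferInstance⟧) ω) :=
        (stronglyMeasurable_condExp.mul stronglyMeasurable_condExp).measurable
      have hN : MeasurableSet[MeasurableSpace.comap Z inferInstance]
          {ω | ¬ ((μ⟦X ⁻¹' s ∩ Y ⁻¹' t | MeasurableSpace.comap Z inferInstance⟧) ω =
            (μ⟦X ⁻¹' s | MeasurableSpace.comap Z inferInstance⟧) ω *
            (μ⟦Y ⁻¹' t | MeasurableSpace.comap Z inferInstance⟧) ω)} :=
        (measurableSet_eq_fun hu hv).compl
      have hNnull : (μ[|R ⁻¹' {false}])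
          {ω | ¬ ((μ⟦X ⁻¹' s ∩ Y ⁻¹' t | MeasurableSpace.comap Z inferInstance⟧) ω =
            (μ⟦X ⁻¹' s | MeasurableSpace.comap Z inferInstance⟧) ω *
            (μ⟦Y ⁻¹' t | MeasurableSpace.comap Z inferInstance⟧) ω)} = 0 := ae_iff.1 H
      have := aux_null_of_cond_null hR.comap_le hInd hEmR hEpos (hZT _ hN) hNnull
      exact ae_iff.2 this
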